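/- Let 𝔫 = 𝔫⁰ ⊕ 𝔫¹ be a Hoffman graph where 𝔫⁰ has exactly one fat vertex, at least two slim vertices, every slim vertex of 𝔫⁰ is adjacent to the fat vertex, and 𝔫¹ is non-empty. If the slim subgraph of 𝔫 (the induced graph on the slim vertices) is connected, then for every slim vertex x of 𝔫⁰, the slim subgraph of 𝔫 − x is connected. -/

import Mathlib

/-- A Hoffman graph: a finite simple graph with vertices labeled slim or fat,
fat vertices pairwise non-adjacent, each fat vertex with a slim neighbor. -/
structure HoffmanGraph (V : Type) where
  adj : V → V → Prop
  symm : Symmetric adj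
  irrefl : Irreflexive adj
  slim : V → Prop
  fat_slim_nbr : ∀ x, ¬ slim x → ∃ y, slim y ∧ adj x y
  fat_not_adj : ∀ x y, ¬ slim x → ¬ slim y → ¬ adj x y

namespace HoffmanGraph

variable {V W U : Type}

def slimSet (H : HoffmanGraph V) : Set V := {x | H.slim x}

def toSimple (H : HoffmanGraph V) : SimpleGraph V where
  Adj := H.adj
  symm := ⟨fun _ _ h => H.symm h⟩
  loopless := ⟨H.irrefl⟩

/-- common fat neighbours of `x` and `y` within the carrier set `S`. -/
def fatCommonOn (H : HoffmanGraph V) (S : Set V) (x y : V) : Set V :=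
  {z | z ∈ S ∧ ¬ H.slim z ∧ H.adj x z ∧ H.adj y z}

/-- The induced Hoffman subgraph of `H` on `S` is the sum of the induced subgraphs
on the sets `P i`. -/
def IsSumOn (H : HoffmanGraph V) (S : Set V) {ι : Type} (P : ι → Set V) : Prop :=
  (∀ i, P i ⊆ S) ∧
  (⋃ i, P i) = S ∧
  (∀ x ∈ S, H.slim x → ∃! i, x ∈ P i) ∧
  (∀ i, ∀ x ∈ P i, H.slim x → ∀ z ∈ S, ¬ H.slim z → H.adj x z → z ∈ P i) ∧
  (∀ i, ∀ z ∈ P i, ¬ H.slim z → ∃ x ∈ P i, H.slim x ∧ H.adj z x) ∧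
  (∀ i j, i ≠ j → ∀ x ∈ P i, ∀ y ∈ P j, H.slim x → H.slim y →
    (H.fatCommonOn S x y).ncard ≤ 1 ∧ ((H.fatCommonOn S x y).ncard = 1 ↔ H.adj x y))

/-- Binary sum. -/
def IsSumOn2 (H : HoffmanGraph V) (S A B : Set V) : Prop :=
  H.IsSumOn S (fun b : Bool => if b then A else B)

/-- The induced Hoffman subgraph on `S` is non-empty and not a sum of two non-empty
Hoffman subgraphs. -/
def Indecomposable (H : HoffmanGraph V) (S : Set V) : Prop :=
  S.Nonempty ∧ ∀ A B : Set V, A.Nonempty → B.Nonempty → ¬ H.IsSumOn2 S A B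

/-- `⟪X⟫`: `X` together with the fat neighbours (inside the carrier `S`) of its members. -/
def hind (H : HoffmanGraph V) (S X : Set V) : Set V :=
  X ∪ {z | z ∈ S ∧ ¬ H.slim z ∧ ∃ x ∈ X, H.adj x z}

/-- `e` is an isomorphism of Hoffman graphs. -/
def IsIso (H : HoffmanGraph V) (K : HoffmanGraph W) (e : V ≃ W) : Prop :=
  (∀ x y, H.adj x y ↔ K.adj (e x) (e y)) ∧ ∀ x, (H.slim x ↔ K.slim (e x))

/-- `K` is isomorphic to the induced Hoffman subgraph of `L` on `S`. -/
def IsoToInduced (K : HoffmanGraph W) (L : HoffmanGraph U) (S : Set U) : Prop :=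
  ∃ e : W ≃ S, (∀ x y, K.adj x y ↔ L.adj (e x).1 (e y).1) ∧ ∀ x, (K.slim x ↔ L.slim (e x).1)

/-- `K` is isomorphic to an induced Hoffman subgraph of `L`. -/
def IsSubgraphOf (K : HoffmanGraph W) (L : HoffmanGraph U) : Prop :=
  ∃ S : Set U, IsoToInduced K L S

/-- The induced Hoffman subgraph on `S` is (isomorphic to) `𝔥₂`:
one slim vertex adjacent to two fat vertices. -/
def IsH2On (H : HoffmanGraph V) (S : Set V) : Prop :=
  ∃ s f₁ f₂ : V, f₁ ≠ f₂ ∧ S = {s, f₁, f₂} ∧ H.slim s ∧ ¬ H.slim f₁ ∧ ¬ H.slim f₂ ∧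
    H.adj s f₁ ∧ H.adj s f₂

/-- The induced Hoffman subgraph on `S` belongs to the family `𝔒`: it is `𝔥₂` or an
indecomposable fat Hoffman graph with at least 2 slim vertices and exactly one fat vertex. -/
def MemO (H : HoffmanGraph V) (S : Set V) : Prop :=
  H.IsH2On S ∨
  (H.Indecomposable S ∧ 2 ≤ (S ∩ H.slimSet).ncard ∧
    ∃ w ∈ S, ¬ H.slim w ∧ (∀ z ∈ S, ¬ H.slim z → z = w) ∧ ∀ x ∈ S, H.slim x → H.adj x w)

/-- The induced Hoffman subgraph of `L` on `S` is isomorphic to a member of the family `ℋ`. -/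
def MemFam (ℋ : ∀ W : Type, HoffmanGraph W → Prop) (L : HoffmanGraph U) (S : Set U) : Prop :=
  ∃ (W : Type) (K : HoffmanGraph W), ℋ W K ∧ IsoToInduced K L S

/-- `K` is a sum of members of `ℋ`. -/
def IsCoverGraph (ℋ : ∀ W : Type, HoffmanGraph W → Prop) (K : HoffmanGraph U) : Prop :=
  ∃ (n : ℕ) (P : Fin n → Set U), K.IsSumOn Set.univ P ∧ ∀ i, MemFam ℋ K (P i)

/-- `G` is a slim `ℋ`-line graph. -/
def IsSlimLine (ℋ : ∀ W : Type, HoffmanGraph W → Prop) {V : Type} (G : SimpleGraph V) : Prop :=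
  ∃ (U : Type) (K : HoffmanGraph U) (ι : V → U), Finite U ∧ Function.Injective ι ∧
    (∀ a, K.slim (ι a)) ∧ (∀ a b, G.Adj a b ↔ K.adj (ι a) (ι b)) ∧ IsCoverGraph ℋ K

/-- `K` (with slim vertices identified with `V(G)` via `ι`) is a strict `ℋ`-cover of `G`. -/
def IsStrictCover (ℋ : ∀ W : Type, HoffmanGraph W → Prop) {V U : Type}
    (G : SimpleGraph V) (K : HoffmanGraph U) (ι : V → U) : Prop :=
  Finite U ∧ Function.Injective ι ∧ (∀ a b, G.Adj a b ↔ K.adj (ι a) (ι b)) ∧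
  (∀ u, K.slim u ↔ ∃ a, ι a = u) ∧ IsCoverGraph ℋ K

/-- Two strict covers are equivalent: an isomorphism restricting to the identity on `G`. -/
def EquivCovers {V U U' : Type} (K : HoffmanGraph U) (ι : V → U)
    (K' : HoffmanGraph U') (ι' : V → U') : Prop :=
  ∃ φ : U ≃ U', IsIso K K' φ ∧ ∀ a, φ (ι a) = ι' a

/-- The family `ℋ̄ = {𝔥₂} ∪ {𝔤 ∈ 𝔒 : 𝔤 is a Hoffman subgraph of a member of ℋ}`. -/
def BarFam (ℋ : ∀ W : Type, HoffmanGraph W → Prop) : ∀ W : Type, HoffmanGraph W → Prop :=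
  fun _ K => K.IsH2On Set.univ ∨
    (K.MemO Set.univ ∧ ∃ (U : Type) (L : HoffmanGraph U), ℋ U L ∧ IsSubgraphOf K L)

/-- `G` has a strict `ℱ`-cover and it is unique up to equivalence. -/
def UniqueStrictCover (ℱ : ∀ W : Type, HoffmanGraph W → Prop) {V : Type}
    (G : SimpleGraph V) : Prop :=
  (∃ (U : Type) (K : HoffmanGraph U) (ι : V → U), IsStrictCover ℱ G K ι) ∧
  ∀ (U U' : Type) (K : HoffmanGraph U) (K' : HoffmanGraph U') (ι : V → U) (ι' : V → U'),
    IsStrictCover ℱ G K ι → IsStrictCover ℱ G K' ι' → EquivCovers K ι K' ι'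

end HoffmanGraph
open HoffmanGraph in
/-- If `𝔫 = 𝔫⁰ ⊕ 𝔫¹` with `𝔫⁰` having a unique fat vertex adjacent to all of its
(at least two) slim vertices and `𝔫¹` non-empty, and the slim subgraph of `𝔫` is
connected, then deleting any slim vertex of `𝔫⁰` keeps the slim subgraph connected. -/
theorem stmt3 {V : Type} [Fintype V] (H : HoffmanGraph V) (A B : Set V)
    (hsum : H.IsSumOn2 Set.univ A B) (hB : B.Nonempty)
    (w : V) (hwA : w ∈ A) (hwfat : ¬ H.slim w)
    (huniq : ∀ z ∈ A, ¬ H.slim z → z = w)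
    (hadj : ∀ x ∈ A, H.slim x → H.adj x w)
    (hcard : 2 ≤ (A ∩ H.slimSet).ncard)
    (hconn : (H.toSimple.induce H.slimSet).Connected) :
    ∀ x ∈ A, H.slim x → (H.toSimple.induce (H.slimSet \ {x})).Connected := by
  obtain ⟨h1, h2, h3, h4, h5, h6⟩ := hsum
  intro x hxA hxs
  have d3 : ∀ a, H.slim a → a ∈ A → a ∈ B → False := by
    intro a hs haA haB
    obtain ⟨i, -, hu⟩ := h3 a trivial hs
    have ht : (true : Bool) = i := hu true (by simpa using haA)
    have hf : (false : Bool) = i := hu false (by simpa using haB)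
    simp [← ht] at hf
  have d4 : ∀ a : V, a ∈ A ∨ a ∈ B := by
    intro a
    have ha : a ∈ ⋃ i, (fun c : Bool => if c then A else B) i := h2 ▸ trivial
    simp only [Set.mem_iUnion] at ha
    obtain ⟨i, hi⟩ := ha
    cases i
    · right; simpa using hi
    · left; simpa using hi
  have d1 : ∀ a ∈ A, H.slim a → ∀ z, ¬ H.slim z → H.adj a z → z = w := by
    intro a ha hs z hz hadjz
    have := h4 true a (by simpa using ha) hs z trivial hz hadjz
    exact huniq z (by simpa using this) hz
  have d2 : ∀ a ∈ A, H.slim a → ∀ y ∈ B, H.slim y → (H.adj a y ↔ H.adj y w) := by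
    intro a ha hsa y hy hsy
    obtain ⟨hle, hiff⟩ := h6 true false (by simp) a (by simpa using ha) y (by simpa using hy) hsa hsy
    by_cases hyw : H.adj y w
    · have hset : H.fatCommonOn Set.univ a y = {w} := by
        ext z
        constructor
        · rintro ⟨-, hz, haz, hyz⟩
          exact d1 a ha hsa z hz haz
        · rintro rfl
          exact ⟨trivial, hwfat, hadj a ha hsa, hyw⟩
      rw [hset] at hiff
      simp only [Set.ncard_singleton] at hiff
      simp [hiff.mp trivial, hyw]
    · have hset : H.fatCommonOn Set.univ a y = ∅ := by
        ext z
        simp only [Set.mem_empty_iff_false, iff_false]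
        rintro ⟨-, hz, haz, hyz⟩
        exact hyw ((d1 a ha hsa z hz haz) ▸ hyz)
      rw [hset] at hiff
      simp only [Set.ncard_empty] at hiff
      constructor
      · intro hay
        exact absurd (hiff.mpr hay) (by norm_num)
      · intro h; exact absurd h hyw
  -- a slim vertex of B
  obtain ⟨v0, hv0B⟩ := hB
  have hBslim : ∃ b0 ∈ B, H.slim b0 := by
    by_cases hs : H.slim v0
    · exact ⟨v0, hv0B, hs⟩
    · obtain ⟨y, hyB, hys, -⟩ := h5 false v0 (by simpa using hv0B) hs
      exact ⟨y, by simpa using hyB, hys⟩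
  obtain ⟨b0, hb0B, hb0s⟩ := hBslim
  have hAne : (A ∩ H.slimSet).Nonempty := by
    have h0 : (A ∩ H.slimSet).ncard ≠ 0 := by omega
    exact Set.nonempty_of_ncard_ne_zero h0
  obtain ⟨a0, ha0A, ha0s⟩ := hAne
  obtain ⟨x', hx'mem, hx'ne⟩ := Set.exists_ne_of_one_lt_ncard (s := A ∩ H.slimSet) (by omega) x
  have hx'A : x' ∈ A := hx'mem.1
  have hx's : H.slim x' := hx'mem.2
  -- find a crossing edge, hence a slim vertex of B adjacent to w
  have cross : ∃ t ∈ B, H.slim t ∧ H.adj t w := by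
    have main : ∀ (u v : ↥H.slimSet) (p : (H.toSimple.induce H.slimSet).Walk u v),
        u.1 ∈ A → v.1 ∈ B → ∃ t ∈ B, H.slim t ∧ H.adj t w := by
      intro u v p
      induction p with
      | @nil u => intro huA hvB; exact (d3 u.1 u.2 huA hvB).elim
      | @cons u m v h q ih =>
        intro huA hvB
        rcases d4 m.1 with hmA | hmB
        · exact ih hmA hvB
        · have hadjum : H.adj u.1 m.1 := h
          have : H.adj m.1 w := (d2 u.1 huA u.2 m.1 hmB m.2).mp hadjum
          exact ⟨m.1, hmB, m.2, this⟩
    obtain ⟨p⟩ := hconn.preconnected ⟨a0, ha0s⟩ ⟨b0, hb0s⟩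
    exact main _ _ p ha0A hb0B
  obtain ⟨b, hbB, hbs, hbw⟩ := cross
  have hbA : ∀ a ∈ A, H.slim a → H.adj a b := fun a ha hs => (d2 a ha hs b hbB hbs).mpr hbw
  have hbx : b ≠ x := fun h => d3 b hbs (h ▸ hxA) hbB
  have hbmem : b ∈ H.slimSet \ {x} := ⟨hbs, hbx⟩
  have hx'memd : x' ∈ H.slimSet \ {x} := ⟨hx's, hx'ne⟩
  -- every slim neighbour of x reaches b in the reduced graph
  have L : ∀ u (hus : H.slim u) (hux : u ≠ x), H.adj x u →
      (H.toSimple.induce (H.slimSet \ {x})).Reachable ⟨u, hus, hux⟩ ⟨b, hbmem⟩ := by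
    intro u hus hux hxu
    rcases d4 u with huA | huB
    · have hedge : (H.toSimple.induce (H.slimSet \ {x})).Adj ⟨u, hus, hux⟩ ⟨b, hbmem⟩ :=
        hbA u huA hus
      exact hedge.reachable
    · have huw : H.adj u w := (d2 x hxA hxs u huB hus).mp hxu
      have hx'u : H.adj x' u := (d2 x' hx'A hx's u huB hus).mpr huw
      have e1 : (H.toSimple.induce (H.slimSet \ {x})).Adj ⟨u, hus, hux⟩ ⟨x', hx'memd⟩ :=
        H.symm hx'u
      have e2 : (H.toSimple.induce (H.slimSet \ {x})).Adj ⟨x', hx'memd⟩ ⟨b, hbmem⟩ :=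
        hbA x' hx'A hx's
      exact e1.reachable.trans e2.reachable
  -- main surgery lemma
  have key : ∀ n (u v : ↥H.slimSet) (p : (H.toSimple.induce H.slimSet).Walk u v)
      (hux : u.1 ≠ x) (hvx : v.1 ≠ x), p.length ≤ n →
      (H.toSimple.induce (H.slimSet \ {x})).Reachable ⟨u.1, u.2, hux⟩ ⟨v.1, v.2, hvx⟩ := by
    intro n
    induction n with
    | zero =>
      intro u v p hux hvx hlen
      cases p with
      | nil => exact SimpleGraph.Reachable.refl _
      | cons h q => simp at hlen
    | succ n ih =>
      intro u v p hux hvx hlen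
      cases p with
      | nil => exact SimpleGraph.Reachable.refl _
      | @cons _ m _ h q =>
        by_cases hmx : m.1 = x
        · cases q with
          | nil => exact absurd hmx hvx
          | @cons _ r _ h' q' =>
            have hrx : r.1 ≠ x := by
              intro hr
              have hmr : H.adj m.1 r.1 := h'
              rw [hmx, hr] at hmr
              exact H.irrefl x hmr
            have hru : H.adj x u.1 := by
              have hum : H.adj u.1 m.1 := h
              rw [hmx] at hum
              exact H.symm hum
            have hrr : H.adj x r.1 := by
              have hmr : H.adj m.1 r.1 := h'
              rwa [hmx] at hmr
            have R1 := L u.1 u.2 hux hru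
            have R2 := L r.1 r.2 hrx hrr
            have R3 := ih r v q' hrx hvx (by
              simp only [SimpleGraph.Walk.length_cons] at hlen; omega)
            exact R1.trans (R2.symm.trans R3)
        · have hedge : (H.toSimple.induce (H.slimSet \ {x})).Adj ⟨u.1, u.2, hux⟩ ⟨m.1, m.2, hmx⟩ := h
          exact hedge.reachable.trans (ih m v q hmx hvx (by
            simp only [SimpleGraph.Walk.length_cons] at hlen; omega))
  have hne : Nonempty ↥(H.slimSet \ {x}) := ⟨⟨x', hx'memd⟩⟩
  refine ⟨fun p q => ?_⟩
  obtain ⟨wpq⟩ := hconn.preconnected ⟨p.1, p.2.1⟩ ⟨q.1, q.2.1⟩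
  have := key wpq.length ⟨p.1, p.2.1⟩ ⟨q.1, q.2.1⟩ wpq p.2.2 q.2.2 le_rfl
  exact this
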